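/- arXiv:2501.14454 — 3 statements merged into one kernel-verified Lean document; each statement's English description precedes it below -/
import Mathlib

section
/- Let C₁, C₂ > 0 and K ≥ 0, and let A be the 6×6 real matrix A = [[C₂−C₁, −2K, 0, C₂, 0, C₂], [0, −C₁, 0, −K, 0, 0], [0, 0, −C₁, 0, −K, 0], [C₂, 0, 0, C₂−C₁, 0, C₂], [0, 0, 0, 0, −C₁, 0], [C₂, 0, 0, C₂, 0, C₂−C₁]]. Then the characteristic polynomial of A is p_A(λ) = (λ + C₁)³ ((λ + C₁)³ − 3C₂(λ + C₁)² − 2K²C₂). -/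
open Polynomial

set_option maxHeartbeats 4000000 in
set_option maxRecDepth 20000 in
/-- Characteristic polynomial of the 6×6 moment-evolution matrix for simple shear. -/
theorem stmt7 (C₁ C₂ K : ℝ) (h1 : 0 < C₁) (h2 : 0 < C₂) (hK : 0 ≤ K) :
    Matrix.charpoly
      (!![C₂ - C₁, -2*K, 0, C₂, 0, C₂;
          0, -C₁, 0, -K, 0, 0;
          0, 0, -C₁, 0, -K, 0;
          C₂, 0, 0, C₂ - C₁, 0, C₂;
          0, 0, 0, 0, -C₁, 0;
          C₂, 0, 0, C₂, 0, C₂ - C₁] : Matrix (Fin 6) (Fin 6) ℝ)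
      = (X + C C₁) ^ 3 *
          ((X + C C₁) ^ 3 - C (3 * C₂) * (X + C C₁) ^ 2 - C (2 * K ^ 2 * C₂)) := by
  rw [Matrix.charpoly,
    show Matrix.charmatrix
      (!![C₂ - C₁, -2*K, 0, C₂, 0, C₂;
          0, -C₁, 0, -K, 0, 0;
          0, 0, -C₁, 0, -K, 0;
          C₂, 0, 0, C₂ - C₁, 0, C₂;
          0, 0, 0, 0, -C₁, 0;
          C₂, 0, 0, C₂, 0, C₂ - C₁] : Matrix (Fin 6) (Fin 6) ℝ) =
      !![X - C (C₂ - C₁), C (2*K), 0, -C C₂, 0, -C C₂;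
          0, X + C C₁, 0, C K, 0, 0;
          0, 0, X + C C₁, 0, C K, 0;
          -C C₂, 0, 0, X - C (C₂ - C₁), 0, -C C₂;
          0, 0, 0, 0, X + C C₁, 0;
          -C C₂, 0, 0, -C C₂, 0, X - C (C₂ - C₁)] from by
      apply Matrix.ext
      intro i j
      fin_cases i <;> fin_cases j <;>
        simp [Matrix.charmatrix_apply, sub_eq_add_neg, map_neg,
          show (5:Fin 6) = Fin.succ 4 from rfl, Matrix.cons_val_succ,
          Matrix.vecHead, Matrix.vecTail, Matrix.diagonal_apply, Fin.ext_iff, Fin.val_succ] <;> (try ring) <;> (try decide) <;> skip]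
  simp [Matrix.det_succ_row_zero, Fin.sum_univ_succ, Fin.succAbove, map_ofNat]
  ring
end

section
/- Let M denote the standard Gaussian density M(v) = (2π)^{-3/2} e^{-|v|²/2} on ℝ³ and let γ ∈ [0, 2]. There exist constants C₁, C₂ > 0 such that for all v ∈ ℝ³, C₁ (1 + |v|)^γ ≤ ∫_{ℝ³} |v − v*|^γ M(v*) dv* ≤ C₂ (1 + |v|)^γ. -/
open MeasureTheory Real

private noncomputable def Mx3 (w : EuclideanSpace ℝ (Fin 3)) : ℝ :=
  (2 * Real.pi) ^ (-(3 : ℝ) / 2) * Real.exp (-‖w‖ ^ 2 / 2)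

private lemma Mx3_pos (w : EuclideanSpace ℝ (Fin 3)) : 0 < Mx3 w := by
  unfold Mx3; positivity

private lemma gauss_int3 :
    Integrable (fun w : EuclideanSpace ℝ (Fin 3) => Real.exp (-(1/4 : ℝ) * ‖w‖^2)) := by
  have h := (GaussianFourier.integrable_cexp_neg_mul_sq_norm_add
    (V := EuclideanSpace ℝ (Fin 3)) (b := (1/4 : ℂ))
    (by norm_num) 0 (0 : EuclideanSpace ℝ (Fin 3))).norm
  convert h using 2 with w
  rw [Complex.norm_exp]
  congr 1
  simp [Complex.mul_re, ← Complex.ofReal_pow]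

private lemma poly_gauss_int3 :
    Integrable (fun w : EuclideanSpace ℝ (Fin 3) => (1 + ‖w‖) ^ 2 * Mx3 w) := by
  set c : ℝ := (2 * Real.pi) ^ (-(3 : ℝ) / 2) with hc
  have hc0 : 0 < c := by positivity
  refine (gauss_int3.const_mul (8 * c)).mono' ?_ ?_
  · apply Continuous.aestronglyMeasurable
    unfold Mx3
    fun_prop
  · filter_upwards with w
    rw [Real.norm_of_nonneg (by have := Mx3_pos w; positivity)]
    unfold Mx3
    rw [← hc]
    set r : ℝ := ‖w‖ with hr
    have hr0 : 0 ≤ r := norm_nonneg w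
    have e1 : r ^ 2 / 4 + 1 ≤ Real.exp (r ^ 2 / 4) := Real.add_one_le_exp _
    have e2 : (1 + r) ^ 2 ≤ 8 * Real.exp (r ^ 2 / 4) := by nlinarith [sq_nonneg (r - 1)]
    have e3 : Real.exp (r ^ 2 / 4) * Real.exp (-r ^ 2 / 2) = Real.exp (-(1/4) * r ^ 2) := by
      rw [← Real.exp_add]; ring_nf
    calc (1 + r) ^ 2 * (c * Real.exp (-r ^ 2 / 2))
        ≤ (8 * Real.exp (r ^ 2 / 4)) * (c * Real.exp (-r ^ 2 / 2)) := by
          apply mul_le_mul_of_nonneg_right e2 (by positivity)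
      _ = 8 * c * (Real.exp (r ^ 2 / 4) * Real.exp (-r ^ 2 / 2)) := by ring
      _ = 8 * c * Real.exp (-(1/4) * r ^ 2) := by rw [e3]

private lemma pt_ub3 {γ : ℝ} (hγ0 : 0 ≤ γ) (hγ2 : γ ≤ 2) (v w : EuclideanSpace ℝ (Fin 3)) :
    ‖v - w‖ ^ γ ≤ (1 + ‖v‖) ^ γ * (1 + ‖w‖) ^ 2 := by
  have h1 : ‖v - w‖ ≤ (1 + ‖v‖) * (1 + ‖w‖) := by
    have := norm_sub_le v w
    nlinarith [norm_nonneg v, norm_nonneg w, mul_nonneg (norm_nonneg v) (norm_nonneg w)]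
  calc ‖v - w‖ ^ γ ≤ ((1 + ‖v‖) * (1 + ‖w‖)) ^ γ :=
        Real.rpow_le_rpow (norm_nonneg _) h1 hγ0
    _ = (1 + ‖v‖) ^ γ * (1 + ‖w‖) ^ γ :=
        Real.mul_rpow (by positivity) (by positivity)
    _ ≤ (1 + ‖v‖) ^ γ * (1 + ‖w‖) ^ 2 := by
        apply mul_le_mul_of_nonneg_left _ (by positivity)
        rw [show ((1 + ‖w‖) ^ 2 : ℝ) = (1 + ‖w‖) ^ ((2 : ℕ) : ℝ) by
          rw [Real.rpow_natCast]]
        exact Real.rpow_le_rpow_of_exponent_le (by linarith [norm_nonneg w]) (by exact_mod_cast hγ2)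

private lemma f_int3 {γ : ℝ} (hγ0 : 0 ≤ γ) (hγ2 : γ ≤ 2) (v : EuclideanSpace ℝ (Fin 3)) :
    Integrable (fun w : EuclideanSpace ℝ (Fin 3) => ‖v - w‖ ^ γ * Mx3 w) := by
  refine (poly_gauss_int3.const_mul ((1 + ‖v‖) ^ γ)).mono' ?_ ?_
  · apply Continuous.aestronglyMeasurable
    apply Continuous.mul
    · exact ((continuous_const.sub continuous_id).norm).rpow_const (fun x => Or.inr hγ0)
    · unfold Mx3; fun_prop
  · filter_upwards with w
    have hnn : (0:ℝ) ≤ ‖v - w‖ ^ γ := Real.rpow_nonneg (norm_nonneg _) γ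
    have hM := (Mx3_pos w).le
    rw [Real.norm_of_nonneg (mul_nonneg hnn hM)]
    have := pt_ub3 hγ0 hγ2 v w
    calc ‖v - w‖ ^ γ * Mx3 w ≤ ((1 + ‖v‖) ^ γ * (1 + ‖w‖) ^ 2) * Mx3 w :=
          mul_le_mul_of_nonneg_right this hM
      _ = (1 + ‖v‖) ^ γ * ((1 + ‖w‖) ^ 2 * Mx3 w) := by ring

/-- Two-sided bound for the scattering rate: for `γ ∈ [0,2]`, there are constants
`C₁, C₂ > 0` with `C₁(1+|v|)^γ ≤ ∫ |v−v*|^γ M(v*) dv* ≤ C₂(1+|v|)^γ`, `M` the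
standard Maxwellian on `ℝ³`. -/
theorem stmt14 (γ : ℝ) (hγ : γ ∈ Set.Icc (0 : ℝ) 2) :
    ∃ C₁ : ℝ, 0 < C₁ ∧ ∃ C₂ : ℝ, 0 < C₂ ∧ ∀ v : EuclideanSpace ℝ (Fin 3),
      C₁ * (1 + ‖v‖) ^ γ ≤
          (∫ w : EuclideanSpace ℝ (Fin 3),
            ‖v - w‖ ^ γ * ((2 * Real.pi) ^ (-(3 : ℝ) / 2) * Real.exp (-‖w‖ ^ 2 / 2))) ∧
      (∫ w : EuclideanSpace ℝ (Fin 3),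
            ‖v - w‖ ^ γ * ((2 * Real.pi) ^ (-(3 : ℝ) / 2) * Real.exp (-‖w‖ ^ 2 / 2)))
        ≤ C₂ * (1 + ‖v‖) ^ γ := by
  obtain ⟨hγ0, hγ2⟩ := hγ
  set E := EuclideanSpace ℝ (Fin 3)
  set m : ℝ := (2 * Real.pi) ^ (-(3 : ℝ) / 2) * Real.exp (-(49 : ℝ) / 8) with hm
  have hm0 : 0 < m := by positivity
  set vol : ℝ := (volume (Metric.closedBall (0 : E) (1/2))).toReal with hvol
  have hvol0 : 0 < vol := ENNReal.toReal_pos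
    (Metric.measure_closedBall_pos volume _ (by norm_num : (0:ℝ) < 1/2)).ne' measure_closedBall_lt_top.ne
  refine ⟨m * vol, by positivity, ∫ w : E, (1 + ‖w‖) ^ 2 * Mx3 w, ?_, fun v => ?_⟩
  · rw [integral_pos_iff_support_of_nonneg
      (fun w => by have := Mx3_pos w; positivity) poly_gauss_int3]
    have : Function.support (fun w : E => (1 + ‖w‖) ^ 2 * Mx3 w) = Set.univ := by
      ext w; simp only [Function.mem_support, Set.mem_univ, iff_true]
      have := Mx3_pos w; positivity
    rw [this]
    exact isOpen_univ.measure_pos volume Set.univ_nonempty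
  constructor
  · -- lower bound
    obtain ⟨x, hx3, hxd⟩ : ∃ x : E, ‖x‖ = 3 ∧ ‖v‖ + 3 ≤ ‖v - x‖ := by
      rcases eq_or_ne v 0 with h0 | h0
      · refine ⟨(3 : ℝ) • (EuclideanSpace.single 0 1 : E), ?_, ?_⟩
        · rw [norm_smul, EuclideanSpace.norm_single]; norm_num
        · rw [h0, zero_sub, norm_neg, norm_smul, EuclideanSpace.norm_single]; norm_num
      · have hv0 : (0:ℝ) < ‖v‖ := norm_pos_iff.mpr h0
        refine ⟨(-(3 / ‖v‖)) • v, ?_, ?_⟩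
        · rw [norm_smul]
          rw [norm_neg, Real.norm_of_nonneg (by positivity)]; field_simp
        · have he : v - (-(3 / ‖v‖)) • v = (1 + 3 / ‖v‖) • v := by
            rw [sub_eq_add_neg, ← neg_smul, neg_neg, add_smul, one_smul]
          rw [he, norm_smul, Real.norm_of_nonneg (by positivity)]
          rw [add_mul, one_mul, div_mul_cancel₀ _ hv0.ne']
    set A : Set E := Metric.closedBall x (1/2) with hA
    have hAvol : (volume A).toReal = vol := by
      rw [hA, hvol, Measure.addHaar_closedBall_center]
    have hbd : ∀ w ∈ A, (1 + ‖v‖) ^ γ * m ≤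
        ‖v - w‖ ^ γ * ((2 * Real.pi) ^ (-(3 : ℝ) / 2) * Real.exp (-‖w‖ ^ 2 / 2)) := by
      intro w hw
      rw [hA, Metric.mem_closedBall, dist_eq_norm] at hw
      have hw7 : ‖w‖ ≤ 7/2 := by
        have := norm_le_norm_add_norm_sub' w x  -- fallback
        have h1 : ‖w‖ ≤ ‖x‖ + ‖w - x‖ := by
          calc ‖w‖ = ‖x + (w - x)‖ := by rw [add_sub_cancel]
            _ ≤ ‖x‖ + ‖w - x‖ := norm_add_le _ _
        linarith [hx3 ▸ h1]
      have hvw : 1 + ‖v‖ ≤ ‖v - w‖ := by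
        have h1 : ‖v - x‖ ≤ ‖v - w‖ + ‖w - x‖ := by
          calc ‖v - x‖ = ‖(v - w) + (w - x)‖ := by rw [sub_add_sub_cancel]
            _ ≤ ‖v - w‖ + ‖w - x‖ := norm_add_le _ _
        linarith
      have h2 : (1 + ‖v‖) ^ γ ≤ ‖v - w‖ ^ γ :=
        Real.rpow_le_rpow (by positivity) hvw hγ0
      have h3 : Real.exp (-(49:ℝ)/8) ≤ Real.exp (-‖w‖ ^ 2 / 2) := by
        apply Real.exp_le_exp.mpr
        nlinarith [norm_nonneg w]
      rw [hm]
      calc (1 + ‖v‖) ^ γ * ((2 * Real.pi) ^ (-(3 : ℝ) / 2) * Real.exp (-(49:ℝ)/8))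
          ≤ ‖v - w‖ ^ γ * ((2 * Real.pi) ^ (-(3 : ℝ) / 2) * Real.exp (-(49:ℝ)/8)) :=
            mul_le_mul_of_nonneg_right h2 (by positivity)
        _ ≤ ‖v - w‖ ^ γ * ((2 * Real.pi) ^ (-(3 : ℝ) / 2) * Real.exp (-‖w‖ ^ 2 / 2)) := by
            apply mul_le_mul_of_nonneg_left _ (Real.rpow_nonneg (norm_nonneg _) γ)
            exact mul_le_mul_of_nonneg_left h3 (by positivity)
    have hfint := f_int3 hγ0 hγ2 v
    have h1 : ((1 + ‖v‖) ^ γ * m) * (volume A).toReal ≤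
        ∫ w in A, ‖v - w‖ ^ γ * Mx3 w :=
      by have := setIntegral_ge_of_const_le_real measurableSet_closedBall measure_closedBall_lt_top.ne
          hbd hfint.integrableOn
         exact this
    have h2 : (∫ w in A, ‖v - w‖ ^ γ * Mx3 w) ≤ ∫ w : E, ‖v - w‖ ^ γ * Mx3 w :=
      setIntegral_le_integral hfint (Filter.Eventually.of_forall fun w => by
        have := Mx3_pos w
        have : (0:ℝ) ≤ ‖v - w‖ ^ γ := Real.rpow_nonneg (norm_nonneg _) γ
        positivity)
    have heq : (∫ w : E, ‖v - w‖ ^ γ * Mx3 w) =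
        ∫ w : E, ‖v - w‖ ^ γ * ((2 * Real.pi) ^ (-(3 : ℝ) / 2) * Real.exp (-‖w‖ ^ 2 / 2)) := rfl
    rw [← heq]
    calc m * vol * (1 + ‖v‖) ^ γ = ((1 + ‖v‖) ^ γ * m) * (volume A).toReal := by
          rw [hAvol]; ring
      _ ≤ _ := le_trans h1 h2
  · -- upper bound
    have hfint := f_int3 hγ0 hγ2 v
    have h1 : (∫ w : E, ‖v - w‖ ^ γ * Mx3 w) ≤
        ∫ w : E, (1 + ‖v‖) ^ γ * ((1 + ‖w‖) ^ 2 * Mx3 w) := by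
      apply integral_mono hfint (poly_gauss_int3.const_mul _)
      intro w
      have := pt_ub3 hγ0 hγ2 v w
      have hM := (Mx3_pos w).le
      calc ‖v - w‖ ^ γ * Mx3 w ≤ ((1 + ‖v‖) ^ γ * (1 + ‖w‖) ^ 2) * Mx3 w :=
            mul_le_mul_of_nonneg_right this hM
        _ = (1 + ‖v‖) ^ γ * ((1 + ‖w‖) ^ 2 * Mx3 w) := by ring
    rw [integral_const_mul] at h1
    calc (∫ w : E, ‖v - w‖ ^ γ * ((2 * Real.pi) ^ (-(3 : ℝ) / 2) * Real.exp (-‖w‖ ^ 2 / 2)))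
        = ∫ w : E, ‖v - w‖ ^ γ * Mx3 w := rfl
      _ ≤ (1 + ‖v‖) ^ γ * ∫ w : E, (1 + ‖w‖) ^ 2 * Mx3 w := h1
      _ = (∫ w : E, (1 + ‖w‖) ^ 2 * Mx3 w) * (1 + ‖v‖) ^ γ := by ring
end

section
/- Let M(v*) = (2π)^{-3/2} e^{-|v*|²/2}, let γ ∈ (0,1), α > 1 + γ, and C > 0. Define F(v) = (1+|v|)^γ ∫_{ℝ³} ∫_{S²} M(v*) (1 + |v − ((v−v*)·ω)ω|)^{-α} dω dv*. Then F(v) → 0 as |v| → ∞. -/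
open MeasureTheory Filter Metric
open scoped RealInnerProductSpace ENNReal NNReal

set_option maxHeartbeats 1000000

local notation "E3" => EuclideanSpace ℝ (Fin 3)

lemma aux_sqrt_lip {a b : ℝ} (ha : 1/4 ≤ a) (hb : 1/4 ≤ b) :
    |Real.sqrt a - Real.sqrt b| ≤ |a - b| := by
  have ha0 : 0 ≤ a := by linarith
  have hb0 : 0 ≤ b := by linarith
  have h12 : (1/2 : ℝ) ≤ Real.sqrt a := by
    rw [show (1/2:ℝ) = Real.sqrt (1/4) by
      rw [show (1/4:ℝ) = (1/2)^2 by norm_num, Real.sqrt_sq (by norm_num)]]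
    exact Real.sqrt_le_sqrt ha
  have h12' : (1/2 : ℝ) ≤ Real.sqrt b := by
    rw [show (1/2:ℝ) = Real.sqrt (1/4) by
      rw [show (1/4:ℝ) = (1/2)^2 by norm_num, Real.sqrt_sq (by norm_num)]]
    exact Real.sqrt_le_sqrt hb
  have h1 : (1:ℝ) ≤ Real.sqrt a + Real.sqrt b := by linarith
  have key : (Real.sqrt a - Real.sqrt b) * (Real.sqrt a + Real.sqrt b) = a - b := by
    have h2 := Real.sq_sqrt ha0
    have h3 := Real.sq_sqrt hb0
    nlinarith [h2, h3]
  calc |Real.sqrt a - Real.sqrt b|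
      ≤ |Real.sqrt a - Real.sqrt b| * (Real.sqrt a + Real.sqrt b) :=
        le_mul_of_one_le_right (abs_nonneg _) h1
    _ = |(Real.sqrt a - Real.sqrt b) * (Real.sqrt a + Real.sqrt b)| := by
        rw [abs_mul, abs_of_nonneg (by linarith : (0:ℝ) ≤ Real.sqrt a + Real.sqrt b)]
    _ = |a - b| := by rw [key]

lemma sq_le_of_sq_le {a b : ℝ} (hb : 0 ≤ b) (h : a^2 ≤ b^2) (ha : 0 ≤ a) : a ≤ b := by
  nlinarith

lemma cap_bound (u : E3) (hu : ‖u‖ = 1) {ρ : ℝ} (hρ0 : 0 < ρ) (hρ : ρ ≤ 1/2) :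
    μH[2] (Metric.sphere (0:E3) 1 ∩ Metric.closedBall u ρ) ≤ ENNReal.ofReal (64 * ρ^2) := by
  have hu0 : u ≠ 0 := by
    intro h; rw [h, norm_zero] at hu; norm_num at hu
  set W := (ℝ ∙ u)ᗮ with hWdef
  have hrank : Module.finrank ℝ W = 2 := by
    have h1 : Module.finrank ℝ (ℝ ∙ u) = 1 := finrank_span_singleton hu0
    have h2 := Submodule.finrank_add_finrank_orthogonal (K := (ℝ ∙ u : Submodule ℝ E3))
    rw [h1, finrank_euclideanSpace_fin] at h2
    rw [hWdef]
    omega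
  let b : OrthonormalBasis (Fin 2) ℝ W := (stdOrthonormalBasis ℝ W).reindex (finCongr hrank)
  let e : Fin 2 → E3 := fun i => (b i : E3)
  have heu : ∀ i, ⟪u, e i⟫ = 0 := fun i =>
    Submodule.mem_orthogonal_singleton_iff_inner_right.mp (b i).2
  have he_norm : ∀ i, ‖e i‖ = 1 := fun i => b.orthonormal.1 i
  have he_inner : ⟪e 0, e 1⟫ = 0 := by
    have := b.orthonormal.2 (by norm_num : (0 : Fin 2) ≠ 1)
    exact this
  have hnorm : ∀ x : Fin 2 → ℝ, ‖x 0 • e 0 + x 1 • e 1‖^2 = (x 0)^2 + (x 1)^2 := by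
    intro x
    rw [norm_add_sq_real]
    rw [real_inner_smul_left, real_inner_smul_right, he_inner]
    rw [norm_smul, norm_smul, he_norm, he_norm]
    simp [mul_pow, sq_abs]
  set T : (Fin 2 → ℝ) → E3 := fun x =>
    (x 0 • e 0 + x 1 • e 1) + Real.sqrt (1 - ‖x 0 • e 0 + x 1 • e 1‖^2) • u with hTdef
  have hT : LipschitzOnWith 4 T (Metric.closedBall (0:(Fin 2) → ℝ) (1/2)) := by
    rw [lipschitzOnWith_iff_dist_le_mul]
    intro x hx y hy
    set p := x 0 • e 0 + x 1 • e 1 with hp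
    set q := y 0 • e 0 + y 1 • e 1 with hq
    have hxn : ‖x‖ ≤ 1/2 := by simpa [dist_zero_right] using hx
    have hyn : ‖y‖ ≤ 1/2 := by simpa [dist_zero_right] using hy
    have hxi : ∀ i, |x i| ≤ 1/2 := fun i => le_trans (by simpa using norm_le_pi_norm x i) hxn
    have hyi : ∀ i, |y i| ≤ 1/2 := fun i => le_trans (by simpa using norm_le_pi_norm y i) hyn
    have hpsq : ‖p‖^2 ≤ 1/2 := by
      rw [hp, hnorm]
      nlinarith [hxi 0, hxi 1, abs_nonneg (x 0), abs_nonneg (x 1), sq_abs (x 0), sq_abs (x 1)]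
    have hqsq : ‖q‖^2 ≤ 1/2 := by
      rw [hq, hnorm]
      nlinarith [hyi 0, hyi 1, abs_nonneg (y 0), abs_nonneg (y 1), sq_abs (y 0), sq_abs (y 1)]
    have hpq : p - q = (x 0 - y 0) • e 0 + (x 1 - y 1) • e 1 := by
      rw [hp, hq]; module
    have hpqsq : ‖p - q‖^2 = (x 0 - y 0)^2 + (x 1 - y 1)^2 := by
      rw [hpq]
      exact hnorm (x - y)
    have hd : ∀ i, |x i - y i| ≤ dist x y := by
      intro i
      calc |x i - y i| = dist (x i) (y i) := by rw [Real.dist_eq]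
        _ ≤ dist x y := dist_le_pi_dist x y i
    have hpqd : ‖p - q‖^2 ≤ 2 * (dist x y)^2 := by
      rw [hpqsq]
      have h0 := hd 0; have h1 := hd 1
      nlinarith [abs_nonneg (x 0 - y 0), abs_nonneg (x 1 - y 1), sq_abs (x 0 - y 0), sq_abs (x 1 - y 1), dist_nonneg (x := x) (y := y)]
    -- sqrt part
    have hfs : |Real.sqrt (1 - ‖p‖^2) - Real.sqrt (1 - ‖q‖^2)| ≤ 2 * ‖p - q‖ := by
      have h1 : |Real.sqrt (1 - ‖p‖^2) - Real.sqrt (1 - ‖q‖^2)| ≤ |(1 - ‖p‖^2) - (1 - ‖q‖^2)| :=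
        aux_sqrt_lip (by nlinarith) (by nlinarith)
      have h2 : |(1 - ‖p‖^2) - (1 - ‖q‖^2)| = |‖q‖^2 - ‖p‖^2| := by ring_nf
      have h3 : |‖q‖^2 - ‖p‖^2| ≤ 2 * ‖p - q‖ := by
        have hq1 : ‖q‖ ≤ 1 := by nlinarith [norm_nonneg q]
        have hp1 : ‖p‖ ≤ 1 := by nlinarith [norm_nonneg p]
        have h4 : |‖q‖ - ‖p‖| ≤ ‖q - p‖ := abs_norm_sub_norm_le q p
        have h5 : ‖q - p‖ = ‖p - q‖ := by rw [norm_sub_rev]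
        have : |‖q‖^2 - ‖p‖^2| = |‖q‖ - ‖p‖| * (‖q‖ + ‖p‖) := by
          rw [← abs_of_nonneg (by positivity : (0:ℝ) ≤ ‖q‖ + ‖p‖), ← abs_mul]
          ring_nf
        rw [this]
        calc |‖q‖ - ‖p‖| * (‖q‖ + ‖p‖) ≤ ‖p - q‖ * 2 := by
              apply mul_le_mul (h5 ▸ h4) (by linarith) (by positivity) (norm_nonneg _)
          _ = 2 * ‖p - q‖ := by ring
      calc _ ≤ |(1 - ‖p‖^2) - (1 - ‖q‖^2)| := h1
        _ = |‖q‖^2 - ‖p‖^2| := h2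
        _ ≤ 2 * ‖p - q‖ := h3
    -- combine
    have hTx : T x - T y = (p - q) + (Real.sqrt (1 - ‖p‖^2) - Real.sqrt (1 - ‖q‖^2)) • u := by
      rw [hTdef]; simp only [← hp, ← hq]; module
    have hperp : ⟪p - q, u⟫ = 0 := by
      rw [hpq]
      rw [inner_add_left, real_inner_smul_left, real_inner_smul_left]
      rw [real_inner_comm u (e 0), real_inner_comm u (e 1), heu 0, heu 1]
      ring
    have hTsq : ‖T x - T y‖^2 ≤ 10 * (dist x y)^2 := by
      rw [hTx, norm_add_sq_real]
      rw [real_inner_smul_right, hperp]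
      have hnu : ‖(Real.sqrt (1 - ‖p‖^2) - Real.sqrt (1 - ‖q‖^2)) • u‖^2
          = (Real.sqrt (1 - ‖p‖^2) - Real.sqrt (1 - ‖q‖^2))^2 := by
        rw [norm_smul, hu, Real.norm_eq_abs, mul_one, sq_abs]
      rw [hnu]
      have := sq_abs (Real.sqrt (1 - ‖p‖^2) - Real.sqrt (1 - ‖q‖^2))
      nlinarith [hfs, hpqd, abs_nonneg (Real.sqrt (1 - ‖p‖^2) - Real.sqrt (1 - ‖q‖^2)), norm_nonneg (p - q)]
    have : ‖T x - T y‖ ≤ 4 * dist x y := by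
      apply sq_le_of_sq_le (by positivity) _ (norm_nonneg _)
      nlinarith [hTsq, dist_nonneg (x := x) (y := y)]
    calc dist (T x) (T y) = ‖T x - T y‖ := dist_eq_norm _ _
      _ ≤ 4 * dist x y := this
      _ = (4:ℝ≥0) * dist x y := by norm_num
  -- inclusion
  have hsub : Metric.sphere (0:E3) 1 ∩ Metric.closedBall u ρ ⊆ T '' (Metric.closedBall 0 ρ) := by
    rintro ω ⟨hω1, hω2⟩
    have hωn : ‖ω‖ = 1 := by simpa using hω1
    have hωu : ‖ω - u‖ ≤ ρ := by rwa [Metric.mem_closedBall, dist_eq_norm] at hω2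
    set t := ⟪u, ω⟫ with htdef
    have ht1 : ‖ω - u‖^2 = 2 - 2*t := by
      rw [norm_sub_sq_real, hu, hωn, real_inner_comm u ω, ← htdef]; ring
    have htle : t ≤ 1 := by
      have := real_inner_le_norm u ω
      rw [hu, hωn] at this; simpa using this
    have ht78 : 7/8 ≤ t := by nlinarith [norm_nonneg (ω - u)]
    set P := ω - t • u with hPdef
    have hPu : ⟪u, P⟫ = 0 := by
      rw [hPdef, inner_sub_right, real_inner_smul_right, real_inner_self_eq_norm_sq, hu]
      ring
    have hPW : P ∈ W := Submodule.mem_orthogonal_singleton_iff_inner_right.mpr hPu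
    have hP2 : ‖P‖^2 = 1 - t^2 := by
      rw [hPdef, norm_sub_sq_real, real_inner_smul_right, real_inner_comm u ω, ← htdef,
        norm_smul, hωn, hu, Real.norm_eq_abs]
      rw [mul_one, sq_abs]
      ring
    have hPρ : ‖P‖ ≤ ρ := by
      apply sq_le_of_sq_le (le_of_lt hρ0) _ (norm_nonneg _)
      rw [hP2]
      nlinarith [norm_nonneg (ω - u)]
    set x : Fin 2 → ℝ := fun i => ⟪e i, P⟫ with hxdef
    have hsum : x 0 • e 0 + x 1 • e 1 = P := by
      have h := b.sum_repr' (⟨P, hPW⟩ : W)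
      have h2 : ((∑ i, (inner ℝ (b i) (⟨P, hPW⟩ : W) : ℝ) • b i : W) : E3) = P := congrArg _ h
      refine Eq.trans ?_ h2
      simp only [Fin.sum_univ_two, Submodule.coe_add, SetLike.val_smul]
      simp [hxdef, Submodule.coe_inner, e]
    have hx : x ∈ Metric.closedBall (0:(Fin 2) → ℝ) ρ := by
      rw [Metric.mem_closedBall, dist_zero_right]
      apply (pi_norm_le_iff_of_nonneg (le_of_lt hρ0)).mpr
      intro i
      rw [Real.norm_eq_abs, hxdef]
      calc |⟪e i, P⟫| ≤ ‖e i‖ * ‖P‖ := abs_real_inner_le_norm _ _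
        _ = ‖P‖ := by rw [he_norm, one_mul]
        _ ≤ ρ := hPρ
    refine ⟨x, hx, ?_⟩
    rw [hTdef]
    simp only [hsum]
    rw [hP2]
    have : Real.sqrt (1 - (1 - t^2)) = t := by
      rw [show 1 - (1 - t^2) = t^2 by ring, Real.sqrt_sq (by linarith)]
    rw [this, hPdef]
    abel
  -- measure computation
  have hpi : (μH[2] : Measure ((Fin 2) → ℝ)) = volume := by
    simpa using MeasureTheory.hausdorffMeasure_pi_real (ι := Fin 2)
  calc μH[2] (Metric.sphere (0:E3) 1 ∩ Metric.closedBall u ρ)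
      ≤ μH[2] (T '' Metric.closedBall 0 ρ) := measure_mono hsub
    _ ≤ (4:ℝ≥0) ^ (2:ℝ) * μH[2] (Metric.closedBall (0:(Fin 2) → ℝ) ρ) :=
        (hT.mono (Metric.closedBall_subset_closedBall hρ)).hausdorffMeasure_image_le (by norm_num)
    _ ≤ ENNReal.ofReal (64 * ρ^2) := by
        rw [hpi, closedBall_pi _ (le_of_lt hρ0), volume_pi_pi]
        simp only [Real.volume_closedBall]
        rw [show ((4:ℝ≥0) : ℝ≥0∞) ^ (2:ℝ) = ((16 : ℝ≥0∞)) by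
          rw [show (2:ℝ) = ((2:ℕ):ℝ) by norm_num, ENNReal.rpow_natCast]; norm_num]
        rw [Finset.prod_const, show (Finset.univ : Finset (Fin 2)).card = 2 by simp]
        rw [show (16 : ℝ≥0∞) = ENNReal.ofReal 16 by norm_num]
        rw [sq, ← ENNReal.ofReal_mul (by linarith), ← ENNReal.ofReal_mul (by norm_num)]
        apply ENNReal.ofReal_le_ofReal
        nlinarith

lemma sphere_vol_lt_top : μH[2] (Metric.sphere (0:E3) 1) < ⊤ := by
  have hc : IsCompact (Metric.sphere (0:E3) 1) := isCompact_sphere 0 1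
  have hcov : Metric.sphere (0:E3) 1 ⊆
      ⋃ u : Metric.sphere (0:E3) 1, Metric.ball (u : E3) (1/4) := by
    intro ω hω
    exact Set.mem_iUnion.mpr ⟨⟨ω, hω⟩, by simp [Metric.mem_ball]⟩
  obtain ⟨s, hs⟩ := hc.elim_finite_subcover
    (fun u : Metric.sphere (0:E3) 1 => Metric.ball (u : E3) (1/4))
    (fun _ => Metric.isOpen_ball) hcov
  have hsub : Metric.sphere (0:E3) 1 ⊆
      ⋃ u ∈ s, Metric.sphere (0:E3) 1 ∩ Metric.closedBall (u : E3) (1/4) := by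
    intro ω hω
    obtain ⟨u, hu1, hu2⟩ := Set.mem_iUnion₂.mp (hs hω)
    exact Set.mem_iUnion₂.mpr ⟨u, hu1, hω, Metric.ball_subset_closedBall hu2⟩
  calc μH[2] (Metric.sphere (0:E3) 1)
      ≤ ∑ u ∈ s, μH[2] (Metric.sphere (0:E3) 1 ∩ Metric.closedBall (u : E3) (1/4)) :=
        le_trans (measure_mono hsub) (measure_biUnion_finset_le s _)
    _ < ⊤ := by
        apply ENNReal.sum_lt_top.mpr
        intro u _
        have hu : ‖(u : E3)‖ = 1 := by
          have := u.2; simpa [Metric.mem_sphere, dist_eq_norm] using this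
        exact lt_of_le_of_lt (cap_bound u hu (by norm_num) (by norm_num)) ENNReal.ofReal_lt_top

lemma inner_int_bound {α : ℝ} (hα : 0 < α) (v w : E3) (hv : 8 ≤ ‖v‖) :
    ∫ ω in Metric.sphere (0:E3) 1, (1 + ‖v - ⟪v - w, ω⟫ • ω‖) ^ (-α) ∂μH[2]
      ≤ 256 / ‖v‖ + (μH[2] (Metric.sphere (0:E3) 1)).toReal * (1 + Real.sqrt ‖v‖) ^ (-α) := by
  haveI : IsFiniteMeasure ((μH[2] : Measure E3).restrict (Metric.sphere (0:E3) 1)) :=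
    ⟨by rw [Measure.restrict_apply_univ]; exact sphere_vol_lt_top⟩
  have hSmeas : MeasurableSet (Metric.sphere (0:E3) 1) :=
    (Metric.isClosed_sphere).measurableSet
  set r := ‖v‖ with hr
  have hr0 : (0:ℝ) < r := by linarith
  set c := (1 + Real.sqrt r) ^ (-α) with hcdef
  have hsr0 : (0:ℝ) ≤ Real.sqrt r := Real.sqrt_nonneg r
  have hc0 : 0 ≤ c := Real.rpow_nonneg (by linarith) _
  set A := Metric.sphere (0:E3) 1 ∩ {ω : E3 | ‖v - ⟪v, ω⟫ • ω‖ ≤ Real.sqrt r} with hAdef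
  have hAsub : A ⊆ Metric.sphere (0:E3) 1 := Set.inter_subset_left
  have hAmeas : MeasurableSet A := by
    apply hSmeas.inter
    apply (isClosed_le ?_ continuous_const).measurableSet
    exact (by fun_prop : Continuous fun ω : E3 => v - ⟪v, ω⟫ • ω).norm
  -- measure of A
  have hAle : μH[2] A ≤ ENNReal.ofReal (256 / r) := by
    set u : E3 := r⁻¹ • v with hudef
    have hu : ‖u‖ = 1 := by
      rw [hudef, norm_smul, Real.norm_eq_abs, abs_of_pos (by positivity)]
      field_simp
      exact hr.symm
    set ρ := Real.sqrt (2/r) with hρdef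
    have hρ0 : 0 < ρ := Real.sqrt_pos.mpr (by positivity)
    have hρsq : ρ^2 = 2/r := Real.sq_sqrt (by positivity)
    have hρle : ρ ≤ 1/2 := by
      rw [hρdef, show (1/2 : ℝ) = Real.sqrt (1/4) by
        rw [show (1/4:ℝ) = (1/2)^2 by norm_num, Real.sqrt_sq (by norm_num)]]
      apply Real.sqrt_le_sqrt
      rw [div_le_div_iff₀ hr0 (by norm_num)]
      linarith
    have hsub2 : A ⊆ (Metric.sphere (0:E3) 1 ∩ Metric.closedBall u ρ)
        ∪ (Metric.sphere (0:E3) 1 ∩ Metric.closedBall (-u) ρ) := by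
      rintro ω ⟨hωS, hωle⟩
      have hω1 : ‖ω‖ = 1 := by simpa using hωS
      simp only [Set.mem_setOf_eq] at hωle
      have hsq : ‖v - ⟪v, ω⟫ • ω‖^2 = r^2 - ⟪v, ω⟫^2 := by
        rw [norm_sub_sq_real, real_inner_smul_right, norm_smul, Real.norm_eq_abs, hω1, hr]
        rw [mul_one, sq_abs]
        ring
      have hsqle : ‖v - ⟪v, ω⟫ • ω‖^2 ≤ r := by
        calc ‖v - ⟪v, ω⟫ • ω‖^2 ≤ (Real.sqrt r)^2 := by
              apply pow_le_pow_left₀ (norm_nonneg _) hωle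
          _ = r := Real.sq_sqrt hr0.le
      have hinner : r^2 - r ≤ ⟪v, ω⟫^2 := by linarith [hsq ▸ hsqle]
      set t := ⟪u, ω⟫ with htdef
      have htv : ⟪v, ω⟫ = r * t := by
        rw [htdef, hudef, real_inner_smul_left]
        field_simp
      have ht2 : 1 - 1/r ≤ t^2 := by
        rw [htv] at hinner
        have h3 : r^2 * (1 - 1/r) ≤ r^2 * t^2 := by
          calc r^2 * (1 - 1/r) = r^2 - r := by field_simp
            _ ≤ (r*t)^2 := hinner
            _ = r^2 * t^2 := by ring
        nlinarith [mul_pos hr0 hr0, sq_nonneg t, sq_nonneg r]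
      have htabs : |t| ≤ 1 := by
        have := abs_real_inner_le_norm u ω
        rw [hu, hω1] at this
        simpa using this
      have ht1 : t ≤ 1 := le_trans (le_abs_self t) htabs
      have htm1 : -1 ≤ t := neg_le_of_neg_le (le_trans (neg_le_abs t) htabs)
      rcases le_or_gt 0 t with htpos | htneg
      · left
        refine ⟨hωS, ?_⟩
        rw [Metric.mem_closedBall, dist_eq_norm]
        apply sq_le_of_sq_le hρ0.le _ (norm_nonneg _)
        have hn : ‖ω - u‖^2 = 2 - 2*t := by
          rw [norm_sub_sq_real, hω1, hu, real_inner_comm u ω, ← htdef]; ring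
        rw [hn, hρsq]
        have ht' : 1 - 1/r ≤ t := by
          nlinarith [mul_nonneg htpos (sub_nonneg.mpr ht1)]
        have h2r : 2/r = 2*(1/r) := by ring
        linarith
      · right
        refine ⟨hωS, ?_⟩
        rw [Metric.mem_closedBall, dist_eq_norm]
        apply sq_le_of_sq_le hρ0.le _ (norm_nonneg _)
        have hn : ‖ω - -u‖^2 = 2 + 2*t := by
          rw [show ω - -u = ω + u by abel, norm_add_sq_real, hω1, hu,
            real_inner_comm u ω, ← htdef]
          ring
        rw [hn, hρsq]
        have ht' : 1 - 1/r ≤ -t := by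
          nlinarith [mul_nonneg (le_of_lt (neg_pos.mpr htneg)) (by linarith : (0:ℝ) ≤ 1 + t)]
        have h2r : 2/r = 2*(1/r) := by ring
        linarith
    have hmu : ‖-u‖ = 1 := by rwa [norm_neg]
    calc μH[2] A ≤ μH[2] ((Metric.sphere (0:E3) 1 ∩ Metric.closedBall u ρ)
          ∪ (Metric.sphere (0:E3) 1 ∩ Metric.closedBall (-u) ρ)) := measure_mono hsub2
      _ ≤ μH[2] (Metric.sphere (0:E3) 1 ∩ Metric.closedBall u ρ)
          + μH[2] (Metric.sphere (0:E3) 1 ∩ Metric.closedBall (-u) ρ) := measure_union_le _ _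
      _ ≤ ENNReal.ofReal (64 * ρ^2) + ENNReal.ofReal (64 * ρ^2) := by
          exact add_le_add (cap_bound u hu hρ0 hρle) (cap_bound (-u) hmu hρ0 hρle)
      _ ≤ ENNReal.ofReal (256 / r) := by
          rw [← ENNReal.ofReal_add (by positivity) (by positivity)]
          apply ENNReal.ofReal_le_ofReal
          rw [hρsq]
          have heq : 64*(2/r) + 64*(2/r) = 256/r := by field_simp; ring
          rw [heq]
  -- pointwise bound
  have hpt : ∀ ω ∈ Metric.sphere (0:E3) 1,
      (1 + ‖v - ⟪v - w, ω⟫ • ω‖) ^ (-α) ≤ A.indicator (fun _ => (1:ℝ)) ω + c := by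
    intro ω hωS
    have hω1 : ‖ω‖ = 1 := by simpa using hωS
    have hkey : v - ⟪v - w, ω⟫ • ω = (v - ⟪v, ω⟫ • ω) + ⟪w, ω⟫ • ω := by
      rw [inner_sub_left]; module
    have hperp : ⟪v - ⟪v, ω⟫ • ω, ⟪w, ω⟫ • ω⟫ = 0 := by
      rw [real_inner_smul_right, inner_sub_left, real_inner_smul_left,
        real_inner_self_eq_norm_sq, hω1]
      ring
    have hge : ‖v - ⟪v, ω⟫ • ω‖ ≤ ‖v - ⟪v - w, ω⟫ • ω‖ := by
      apply sq_le_of_sq_le (norm_nonneg _) _ (norm_nonneg _)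
      rw [hkey, norm_add_sq_real, hperp]
      nlinarith [sq_nonneg ‖⟪w, ω⟫ • ω‖, norm_nonneg (⟪w, ω⟫ • ω)]
    by_cases hωA : ω ∈ A
    · rw [Set.indicator_of_mem hωA]
      have : (1 + ‖v - ⟪v - w, ω⟫ • ω‖) ^ (-α) ≤ 1 :=
        Real.rpow_le_one_of_one_le_of_nonpos (by linarith [norm_nonneg (v - ⟪v - w, ω⟫ • ω)])
          (by linarith)
      linarith
    · rw [Set.indicator_of_notMem hωA, zero_add]
      have hnot : Real.sqrt r < ‖v - ⟪v, ω⟫ • ω‖ := by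
        by_contra hcon
        push_neg at hcon
        exact hωA ⟨hωS, hcon⟩
      rw [hcdef]
      apply Real.rpow_le_rpow_of_nonpos (by linarith) (by linarith) (by linarith)
  -- integral bound
  have hcont : Continuous fun ω : E3 => (1 + ‖v - ⟪v - w, ω⟫ • ω‖) ^ (-α) := by
    have hin : Continuous fun ω : E3 => ⟪v - w, ω⟫ :=
      Continuous.inner continuous_const continuous_id
    have h1 : Continuous fun ω : E3 => 1 + ‖v - ⟪v - w, ω⟫ • ω‖ :=
      continuous_const.add (continuous_const.sub (hin.smul continuous_id)).norm
    exact h1.rpow_const (fun ω => Or.inl (by positivity))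
  have hint_f : Integrable (fun ω : E3 => (1 + ‖v - ⟪v - w, ω⟫ • ω‖) ^ (-α))
      ((μH[2] : Measure E3).restrict (Metric.sphere (0:E3) 1)) := by
    apply Integrable.mono' (integrable_const (1:ℝ)) hcont.aestronglyMeasurable
    apply ae_of_all
    intro ω
    rw [Real.norm_eq_abs, abs_of_nonneg (Real.rpow_nonneg (by positivity) _)]
    exact Real.rpow_le_one_of_one_le_of_nonpos
      (by linarith [norm_nonneg (v - ⟪v - w, ω⟫ • ω)]) (by linarith)
  have hint_g : Integrable (fun ω : E3 => A.indicator (fun _ => (1:ℝ)) ω + c)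
      ((μH[2] : Measure E3).restrict (Metric.sphere (0:E3) 1)) :=
    ((integrable_const (1:ℝ)).indicator hAmeas).add (integrable_const c)
  calc ∫ ω in Metric.sphere (0:E3) 1, (1 + ‖v - ⟪v - w, ω⟫ • ω‖) ^ (-α) ∂μH[2]
      ≤ ∫ ω in Metric.sphere (0:E3) 1, (A.indicator (fun _ => (1:ℝ)) ω + c) ∂μH[2] :=
        integral_mono_ae hint_f hint_g ((ae_restrict_iff' hSmeas).mpr (ae_of_all _ hpt))
    _ = ((μH[2] : Measure E3).restrict (Metric.sphere (0:E3) 1) A).toReal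
        + ((μH[2] : Measure E3).restrict (Metric.sphere (0:E3) 1) Set.univ).toReal * c := by
        rw [integral_add ((integrable_const (1:ℝ)).indicator hAmeas) (integrable_const c)]
        rw [integral_indicator_const (1:ℝ) hAmeas, integral_const]
        simp [smul_eq_mul, Measure.real_def]
    _ ≤ 256 / r + (μH[2] (Metric.sphere (0:E3) 1)).toReal * c := by
        apply add_le_add
        · rw [Measure.restrict_apply hAmeas, Set.inter_eq_self_of_subset_left hAsub]
          exact ENNReal.toReal_le_of_le_ofReal (by positivity) hAle
        · rw [Measure.restrict_apply_univ]

lemma gauss_int : Integrable (fun w : E3 => Real.exp (-‖w‖^2/2)) := by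
  have h := GaussianFourier.integrable_cexp_neg_mul_sq_norm_add (V := E3)
    (b := (1/2 : ℂ)) (by norm_num) 0 0
  have h2 := h.norm
  apply h2.congr
  apply ae_of_all
  intro w
  have key : (-(1/2 : ℂ) * (‖w‖:ℂ)^2 + 0 * ((⟪(0:E3), w⟫ : ℝ):ℂ)) = ((-‖w‖^2/2 : ℝ):ℂ) := by
    push_cast
    ring
  beta_reduce
  rw [Complex.norm_exp, key, Complex.ofReal_re]

/-- Decay of the gain term of the adjoint linear Boltzmann operator: for
`0 < γ < 1` and `α > 1 + γ`,
`F(v) = (1+|v|)^γ ∫∫ M(v*) (1+|v'|)^{-α} dω dv* → 0` as `|v| → ∞`. -/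
theorem stmt15 (γ α C : ℝ) (hγ : γ ∈ Set.Ioo (0 : ℝ) 1) (hα : 1 + γ < α) (hC : 0 < C) :
    Filter.Tendsto
      (fun v : EuclideanSpace ℝ (Fin 3) =>
        (1 + ‖v‖) ^ γ *
          ∫ w : EuclideanSpace ℝ (Fin 3),
            ((2 * Real.pi) ^ (-(3 : ℝ) / 2) * Real.exp (-‖w‖ ^ 2 / 2)) *
              ∫ ω in Metric.sphere (0 : EuclideanSpace ℝ (Fin 3)) 1,
                (1 + ‖v - ⟪v - w, ω⟫ • ω‖) ^ (-α) ∂(μH[2]))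
      (Filter.comap norm Filter.atTop) (nhds 0) := by
  obtain ⟨hγ0, hγ1⟩ := hγ
  have hα0 : 0 < α := by linarith
  haveI : IsFiniteMeasure ((μH[2] : Measure E3).restrict (Metric.sphere (0:E3) 1)) :=
    ⟨by rw [Measure.restrict_apply_univ]; exact sphere_vol_lt_top⟩
  set σS := (μH[2] (Metric.sphere (0:E3) 1)).toReal with hσS
  have hσS0 : 0 ≤ σS := ENNReal.toReal_nonneg
  set M : E3 → ℝ := fun w => (2 * Real.pi) ^ (-(3:ℝ)/2) * Real.exp (-‖w‖^2/2) with hMdef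
  have hM0 : ∀ w, 0 ≤ M w := fun w =>
    mul_nonneg (Real.rpow_nonneg (by positivity) _) (Real.exp_nonneg _)
  have hMint : Integrable M := gauss_int.const_mul _
  have hMcont : Continuous M := by
    apply continuous_const.mul
    apply Real.continuous_exp.comp
    fun_prop
  set CM := ∫ w, M w with hCM
  have hCM0 : 0 ≤ CM := integral_nonneg hM0
  -- inner integral
  set I : E3 → E3 → ℝ := fun v w =>
    ∫ ω in Metric.sphere (0:E3) 1, (1 + ‖v - ⟪v - w, ω⟫ • ω‖) ^ (-α) ∂μH[2] with hIdef
  have hI_nonneg : ∀ v w, 0 ≤ I v w := fun v w =>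
    integral_nonneg fun ω => Real.rpow_nonneg (by positivity) _
  have hI_sm : ∀ v : E3, StronglyMeasurable (fun w => I v w) := by
    intro v
    have hjoint : Continuous (fun p : E3 × E3 => (1 + ‖v - ⟪v - p.1, p.2⟫ • p.2‖) ^ (-α)) := by
      have hin : Continuous fun p : E3 × E3 => ⟪v - p.1, p.2⟫ :=
        Continuous.inner (continuous_const.sub continuous_fst) continuous_snd
      have h1 : Continuous fun p : E3 × E3 => 1 + ‖v - ⟪v - p.1, p.2⟫ • p.2‖ :=
        continuous_const.add (continuous_const.sub (hin.smul continuous_snd)).norm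
      exact h1.rpow_const (fun p => Or.inl (by positivity))
    exact hjoint.stronglyMeasurable.integral_prod_right'
  have hI_le_const : ∀ v w, I v w ≤ σS := by
    intro v w
    have hcont : Continuous fun ω : E3 => (1 + ‖v - ⟪v - w, ω⟫ • ω‖) ^ (-α) := by
      have hin : Continuous fun ω : E3 => ⟪v - w, ω⟫ :=
        Continuous.inner continuous_const continuous_id
      have h1 : Continuous fun ω : E3 => 1 + ‖v - ⟪v - w, ω⟫ • ω‖ :=
        continuous_const.add (continuous_const.sub (hin.smul continuous_id)).norm
      exact h1.rpow_const (fun ω => Or.inl (by positivity))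
    have hint_f : Integrable (fun ω : E3 => (1 + ‖v - ⟪v - w, ω⟫ • ω‖) ^ (-α))
        ((μH[2] : Measure E3).restrict (Metric.sphere (0:E3) 1)) := by
      apply Integrable.mono' (integrable_const (1:ℝ)) hcont.aestronglyMeasurable
      apply ae_of_all
      intro ω
      rw [Real.norm_eq_abs, abs_of_nonneg (Real.rpow_nonneg (by positivity) _)]
      exact Real.rpow_le_one_of_one_le_of_nonpos
        (by linarith [norm_nonneg (v - ⟪v - w, ω⟫ • ω)]) (by linarith)
    calc I v w ≤ ∫ _ω in Metric.sphere (0:E3) 1, (1:ℝ) ∂μH[2] := by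
          apply integral_mono hint_f (integrable_const 1)
          intro ω
          exact Real.rpow_le_one_of_one_le_of_nonpos
            (by linarith [norm_nonneg (v - ⟪v - w, ω⟫ • ω)]) (by linarith)
      _ = σS := by
          rw [setIntegral_const, smul_eq_mul, mul_one, hσS, Measure.real_def]
  -- integrability of products and the main inequality
  have hMI_int : ∀ v : E3, Integrable (fun w => M w * I v w) := by
    intro v
    apply Integrable.mono' (hMint.mul_const σS)
      (hMcont.aestronglyMeasurable.mul (hI_sm v).aestronglyMeasurable)
    apply ae_of_all
    intro w
    have hnn : (0:ℝ) ≤ M w * I v w := mul_nonneg (hM0 w) (hI_nonneg v w)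
    calc ‖M w * I v w‖ = M w * I v w := by rw [Real.norm_eq_abs, abs_of_nonneg hnn]
      _ ≤ M w * σS := mul_le_mul_of_nonneg_left (hI_le_const v w) (hM0 w)
  have hFle : ∀ v : E3, 8 ≤ ‖v‖ →
      (1 + ‖v‖) ^ γ * ∫ w, M w * I v w ≤
        (1 + ‖v‖) ^ γ * (CM * (256 / ‖v‖ + σS * (1 + Real.sqrt ‖v‖) ^ (-α))) := by
    intro v hv
    apply mul_le_mul_of_nonneg_left _ (Real.rpow_nonneg (by positivity) _)
    set Jb := 256 / ‖v‖ + σS * (1 + Real.sqrt ‖v‖) ^ (-α) with hJb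
    calc ∫ w, M w * I v w ≤ ∫ w, M w * Jb :=
          integral_mono (hMI_int v) (hMint.mul_const Jb)
            (fun w => mul_le_mul_of_nonneg_left (inner_int_bound hα0 v w hv) (hM0 w))
      _ = CM * Jb := by rw [integral_mul_const, hCM]
  -- the bound function tends to zero
  have hterm1 : Tendsto (fun r : ℝ => (1+r)^γ * r⁻¹) atTop (nhds 0) := by
    apply squeeze_zero' (g := fun r => 2^γ * r^(γ-1))
    · filter_upwards [eventually_ge_atTop (1:ℝ)] with r hr
      have : (0:ℝ) < r := by linarith
      positivity
    · filter_upwards [eventually_ge_atTop (1:ℝ)] with r hr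
      have hr0 : (0:ℝ) < r := by linarith
      have h1 : (1+r)^γ ≤ (2*r)^γ := Real.rpow_le_rpow (by linarith) (by linarith) hγ0.le
      have h2 : (2*r)^γ = 2^γ * r^γ := Real.mul_rpow (by norm_num) (by linarith)
      have h3 : r^γ * r⁻¹ = r^(γ-1) := by
        rw [show γ - 1 = γ + (-1) by ring, Real.rpow_add hr0, Real.rpow_neg_one]
      calc (1+r)^γ * r⁻¹ ≤ (2*r)^γ * r⁻¹ :=
            mul_le_mul_of_nonneg_right h1 (inv_nonneg.mpr hr0.le)
        _ = 2^γ * (r^γ * r⁻¹) := by rw [h2]; ring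
        _ = 2^γ * r^(γ-1) := by rw [h3]
    · have h := tendsto_rpow_neg_atTop (show (0:ℝ) < 1 - γ by linarith)
      have h2 : Tendsto (fun r : ℝ => r^(γ-1)) atTop (nhds 0) := by
        convert h using 2 with r
        ring_nf
      simpa using h2.const_mul ((2:ℝ)^γ)
  have hterm2 : Tendsto (fun r : ℝ => (1+r)^γ * (1 + Real.sqrt r)^(-α)) atTop (nhds 0) := by
    apply squeeze_zero' (g := fun r => (1 + Real.sqrt r)^(2*γ - α))
    · filter_upwards [eventually_ge_atTop (0:ℝ)] with r hr
      have h1 : (0:ℝ) ≤ 1 + r := by linarith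
      positivity
    · filter_upwards [eventually_ge_atTop (0:ℝ)] with r hr
      have hs0 : 0 ≤ Real.sqrt r := Real.sqrt_nonneg r
      have hsq : Real.sqrt r ^ 2 = r := Real.sq_sqrt hr
      have h1 : 1 + r ≤ (1 + Real.sqrt r)^2 := by nlinarith
      have h2 : (1+r)^γ ≤ ((1 + Real.sqrt r)^2)^γ :=
        Real.rpow_le_rpow (by linarith) h1 hγ0.le
      have h3 : ((1 + Real.sqrt r)^2)^γ = (1 + Real.sqrt r)^(2*γ) := by
        rw [← Real.rpow_natCast (1 + Real.sqrt r) 2, ← Real.rpow_mul (by positivity)]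
        norm_num
      have h4 : (1 + Real.sqrt r)^(2*γ) * (1 + Real.sqrt r)^(-α)
          = (1 + Real.sqrt r)^(2*γ - α) := by
        rw [← Real.rpow_add (by positivity), sub_eq_add_neg]
      calc (1+r)^γ * (1 + Real.sqrt r)^(-α)
          ≤ ((1 + Real.sqrt r)^2)^γ * (1 + Real.sqrt r)^(-α) :=
            mul_le_mul_of_nonneg_right h2 (Real.rpow_nonneg (by positivity) _)
        _ = (1 + Real.sqrt r)^(2*γ - α) := by rw [h3, h4]
    · have hin : Tendsto (fun r : ℝ => 1 + Real.sqrt r) atTop atTop := by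
        apply tendsto_atTop_add_const_left
        rw [show Real.sqrt = fun r : ℝ => r ^ (1/2 : ℝ) from funext Real.sqrt_eq_rpow]
        exact tendsto_rpow_atTop (by norm_num)
      have hout := tendsto_rpow_neg_atTop (show (0:ℝ) < α - 2*γ by linarith)
      have : Tendsto (fun s : ℝ => s ^ (2*γ - α)) atTop (nhds 0) := by
        convert hout using 2 with s
        ring_nf
      exact this.comp hin
  have hψ0 : Tendsto (fun r : ℝ => (1+r)^γ * (CM * (256/r + σS * (1 + Real.sqrt r)^(-α))))
      atTop (nhds 0) := by
    have heq : (fun r : ℝ => (1+r)^γ * (CM * (256/r + σS * (1 + Real.sqrt r)^(-α))))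
        = fun r => (CM*256) * ((1+r)^γ * r⁻¹)
            + (CM*σS) * ((1+r)^γ * (1 + Real.sqrt r)^(-α)) := by
      funext r
      field_simp
    rw [heq]
    have := (hterm1.const_mul (CM*256)).add (hterm2.const_mul (CM*σS))
    simpa using this
  -- squeeze
  have hnorm_t : Tendsto (fun v : E3 => ‖v‖) (Filter.comap norm Filter.atTop) atTop :=
    tendsto_comap
  apply tendsto_of_tendsto_of_tendsto_of_le_of_le' tendsto_const_nhds (hψ0.comp hnorm_t)
  · apply Eventually.of_forall
    intro v
    exact mul_nonneg (Real.rpow_nonneg (by positivity) _)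
      (integral_nonneg fun w => mul_nonneg (hM0 w) (hI_nonneg v w))
  · filter_upwards [hnorm_t.eventually (eventually_ge_atTop (8:ℝ))] with v hv
    exact hFle v hv
end
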